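/- For all real x, the standard normal CDF Φ satisfies -x·φ(x)·Φ(x) - φ(x)² + Φ(x)² ≥ 0, where φ is the standard normal PDF. -/

import Mathlib

open Real Set

noncomputable def stdNormalPDF (t : ℝ) : ℝ := (Real.sqrt (2 * Real.pi))⁻¹ * Real.exp (-t ^ 2 / 2)

noncomputable def stdNormalCDF (x : ℝ) : ℝ := ∫ t in Set.Iic x, stdNormalPDF t

section Aux
open MeasureTheory Filter Topology

lemma stdNormalPDF_nonneg (t : ℝ) : 0 ≤ stdNormalPDF t := by
  unfold stdNormalPDF
  positivity

lemma pdf_eq (t : ℝ) : stdNormalPDF t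
    = (Real.sqrt (2 * Real.pi))⁻¹ * Real.exp (-(1/2) * t ^ 2) := by
  unfold stdNormalPDF
  ring_nf

lemma integrable_pdf : Integrable stdNormalPDF := by
  have h := (integrable_exp_neg_mul_sq (by norm_num : (0:ℝ) < 1/2)).const_mul
    ((Real.sqrt (2 * Real.pi))⁻¹)
  refine h.congr (Eventually.of_forall fun t => ?_)
  rw [pdf_eq]

lemma integrable_mul_pdf : Integrable (fun t : ℝ => t * stdNormalPDF t) := by
  have h := (integrable_mul_exp_neg_mul_sq (by norm_num : (0:ℝ) < 1/2)).const_mul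
    ((Real.sqrt (2 * Real.pi))⁻¹)
  refine h.congr (Eventually.of_forall fun t => ?_)
  simp only [pdf_eq]; ring

lemma integrable_sq_pdf : Integrable (fun t : ℝ => t ^ 2 * stdNormalPDF t) := by
  have h := (integrable_rpow_mul_exp_neg_mul_sq (by norm_num : (0:ℝ) < 1/2)
    (by norm_num : (-1:ℝ) < 2)).const_mul ((Real.sqrt (2 * Real.pi))⁻¹)
  refine h.congr (Eventually.of_forall fun t => ?_)
  simp only [pdf_eq]
  rw [show ((2:ℝ)) = ((2:ℕ):ℝ) by norm_num, Real.rpow_natCast]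
  ring

lemma hasDerivAt_pdf (t : ℝ) : HasDerivAt stdNormalPDF (-t * stdNormalPDF t) t := by
  have h1 : HasDerivAt (fun s : ℝ => -s ^ 2 / 2) (-t) t := by
    have := ((hasDerivAt_pow 2 t).neg).div_const 2
    refine this.congr_deriv ?_
    push_cast
    ring
  have h2 := h1.exp
  have h3 := h2.const_mul ((Real.sqrt (2 * Real.pi))⁻¹)
  refine h3.congr_deriv ?_
  unfold stdNormalPDF; ring

lemma tendsto_pdf_atBot : Tendsto stdNormalPDF atBot (𝓝 0) := by
  have h2 : Tendsto (fun s : ℝ => s ^ 2) atBot atTop := by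
    have h := (tendsto_pow_atTop (α := ℝ) (n := 2) (by norm_num)).comp tendsto_neg_atBot_atTop
    have h2 : ((fun x : ℝ => x ^ 2) ∘ Neg.neg) = fun s : ℝ => s ^ 2 := by
      funext s; simp [Function.comp]
    rwa [h2] at h
  have h1 : Tendsto (fun s : ℝ => -s ^ 2 / 2) atBot atBot := by
    have h := tendsto_neg_atTop_atBot.comp (h2.atTop_div_const (by norm_num : (0:ℝ) < 2))
    refine h.congr fun s => ?_
    simp [Function.comp, neg_div]
  have h3 := Real.tendsto_exp_atBot.comp h1
  have h4 := h3.const_mul ((Real.sqrt (2 * Real.pi))⁻¹)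
  rw [mul_zero] at h4
  refine h4.congr fun s => ?_
  unfold stdNormalPDF
  simp [Function.comp]

lemma tendsto_mul_pdf_atBot : Tendsto (fun t : ℝ => t * stdNormalPDF t) atBot (𝓝 0) := by
  have h := (tendsto_rpow_abs_mul_exp_neg_mul_sq_cocompact (by norm_num : (0:ℝ) < 1/2)
    1).mono_left _root_.atBot_le_cocompact
  have h2 := h.const_mul ((Real.sqrt (2 * Real.pi))⁻¹)
  rw [mul_zero] at h2
  refine squeeze_zero_norm (fun t => ?_) h2
  rw [Real.norm_eq_abs, abs_mul, pdf_eq, abs_mul, Real.rpow_one,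
    abs_of_nonneg (by positivity : (0:ℝ) ≤ (Real.sqrt (2 * Real.pi))⁻¹),
    abs_of_nonneg (Real.exp_pos _).le]
  apply le_of_eq
  ring

lemma hasDerivAt_neg_pdf (t : ℝ) :
    HasDerivAt (fun s => -stdNormalPDF s) (t * stdNormalPDF t) t := by
  have h := (hasDerivAt_pdf t).neg
  refine h.congr_deriv ?_
  ring

lemma hasDerivAt_neg_mul_pdf (t : ℝ) :
    HasDerivAt (fun s => -s * stdNormalPDF s) ((t ^ 2 - 1) * stdNormalPDF t) t := by
  have h := ((hasDerivAt_id t).neg).mul (hasDerivAt_pdf t)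
  refine h.congr_deriv ?_
  simp only [Pi.neg_apply, id]
  ring

lemma integrable_sq_sub_pdf : Integrable (fun t : ℝ => (t ^ 2 - 1) * stdNormalPDF t) := by
  have h := integrable_sq_pdf.sub integrable_pdf
  refine h.congr (Eventually.of_forall fun t => ?_)
  simp only [Pi.sub_apply]
  ring

lemma integral_mul_pdf (x : ℝ) :
    ∫ t in Iic x, t * stdNormalPDF t = -stdNormalPDF x := by
  have ht : Tendsto (fun s => -stdNormalPDF s) atBot (𝓝 0) := by
    have := tendsto_pdf_atBot.neg
    rwa [neg_zero] at this
  have h := integral_Iic_of_hasDerivAt_of_tendsto' (a := x) (m := 0)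
    (fun t _ => hasDerivAt_neg_pdf t) integrable_mul_pdf.integrableOn ht
  simpa using h

lemma integral_sq_sub_pdf (x : ℝ) :
    ∫ t in Iic x, (t ^ 2 - 1) * stdNormalPDF t = -x * stdNormalPDF x := by
  have ht : Tendsto (fun s => -s * stdNormalPDF s) atBot (𝓝 0) := by
    have := tendsto_mul_pdf_atBot.neg
    rw [neg_zero] at this
    refine this.congr fun s => ?_
    ring
  have h := integral_Iic_of_hasDerivAt_of_tendsto' (a := x) (m := 0)
    (fun t _ => hasDerivAt_neg_mul_pdf t) integrable_sq_sub_pdf.integrableOn ht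
  simpa using h

lemma integral_sq_pdf (x : ℝ) :
    ∫ t in Iic x, t ^ 2 * stdNormalPDF t = stdNormalCDF x - x * stdNormalPDF x := by
  have e : (fun t : ℝ => t ^ 2 * stdNormalPDF t)
      = fun t : ℝ => (t ^ 2 - 1) * stdNormalPDF t + stdNormalPDF t := by
    funext t; ring
  rw [e, integral_add integrable_sq_sub_pdf.integrableOn integrable_pdf.integrableOn,
    integral_sq_sub_pdf]
  have : ∫ t in Iic x, stdNormalPDF t = stdNormalCDF x := rfl
  rw [this]; ring

lemma key (x : ℝ) : (∫ t in Iic x, t * stdNormalPDF t) ^ 2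
    ≤ (∫ t in Iic x, stdNormalPDF t) * (∫ t in Iic x, t ^ 2 * stdNormalPDF t) := by
  set A := ∫ t in Iic x, stdNormalPDF t with hA
  set B := ∫ t in Iic x, t * stdNormalPDF t with hB
  set C := ∫ t in Iic x, t ^ 2 * stdNormalPDF t with hC
  have quad : ∀ l : ℝ, 0 ≤ A * (l * l) + (-2 * B) * l + C := by
    intro l
    have h0 : 0 ≤ ∫ t in Iic x, (l - t) ^ 2 * stdNormalPDF t :=
      setIntegral_nonneg measurableSet_Iic fun t _ =>
        mul_nonneg (sq_nonneg _) (stdNormalPDF_nonneg t)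
    have hexp : ∫ t in Iic x, (l - t) ^ 2 * stdNormalPDF t
        = A * (l * l) + (-2 * B) * l + C := by
      have e : (fun t : ℝ => (l - t) ^ 2 * stdNormalPDF t)
          = fun t : ℝ => (l ^ 2 * stdNormalPDF t - (2 * l) * (t * stdNormalPDF t))
            + t ^ 2 * stdNormalPDF t := by
        funext t; ring
      have hi1 : IntegrableOn (fun t : ℝ =>
          l ^ 2 * stdNormalPDF t - (2 * l) * (t * stdNormalPDF t)) (Iic x) := by
        have h := ((integrable_pdf.const_mul (l ^ 2)).sub
          (integrable_mul_pdf.const_mul (2 * l))).integrableOn (s := Iic x)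
        refine h.congr (Eventually.of_forall fun t => ?_)
        simp [Pi.sub_apply]
      rw [e, integral_add hi1 integrable_sq_pdf.integrableOn,
        integral_sub ((integrable_pdf.integrableOn).const_mul _)
          ((integrable_mul_pdf.integrableOn).const_mul _),
        MeasureTheory.integral_const_mul, MeasureTheory.integral_const_mul, ← hA, ← hB, ← hC]
      ring
    linarith [hexp ▸ h0]
  have hd := discrim_le_zero quad
  rw [discrim] at hd
  nlinarith [hd]

end Aux

/-- `-x φ(x) Φ(x) - φ(x)² + Φ(x)² ≥ 0` for all real `x`. -/
theorem stmt1 (x : ℝ) :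
    -x * stdNormalPDF x * stdNormalCDF x - (stdNormalPDF x) ^ 2 + (stdNormalCDF x) ^ 2 ≥ 0 := by
  have hk := key x
  rw [integral_mul_pdf, integral_sq_pdf] at hk
  have hcdf : (∫ t in Iic x, stdNormalPDF t) = stdNormalCDF x := rfl
  rw [hcdf] at hk
  nlinarith [hk]
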